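/- Let y1, y2, y3, a1, a2, a3 be positive real numbers such that y1*y2*y3 = a1*a2*a3, y1+y2+y3 ≥ a1+a2+a3, and y1*y2 + y2*y3 + y1*y3 ≥ a1*a2 + a2*a3 + a1*a3. Then (log y1)^2 + (log y2)^2 + (log y3)^2 ≥ (log a1)^2 + (log a2)^2 + (log a3)^2. -/

import Mathlib

open Real MeasureTheory Set Filter Metric
open scoped Topology

/-- The integrand of the key integral representation of `(log x)^2`. -/
noncomputable def SSLI.F (x s : ℝ) : ℝ :=
  (Real.log (1 + x * s) + Real.log (x + s) - Real.log x - 2 * Real.log (1 + s)) / s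

/-- Derivative of `F x s` with respect to `x`. -/
noncomputable def SSLI.D (x s : ℝ) : ℝ :=
  (x ^ 2 - 1) / (x * (1 + x * s) * (x + s))

namespace SSLI

lemma F_eq {x s : ℝ} (hx : 0 < x) (hs : 0 < s) :
    F x s = Real.log (1 + s * (x - 1) ^ 2 / (x * (1 + s) ^ 2)) / s := by
  have h1 : (0:ℝ) < 1 + x * s := by positivity
  have h2 : (0:ℝ) < x + s := by positivity
  have h3 : (0:ℝ) < 1 + s := by positivity
  have key : 1 + s * (x - 1) ^ 2 / (x * (1 + s) ^ 2)
      = (1 + x * s) * (x + s) / (x * (1 + s) ^ 2) := by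
    field_simp
    ring
  rw [F, key, Real.log_div (by positivity) (by positivity), Real.log_mul h1.ne' h2.ne',
    Real.log_mul hx.ne' (by positivity), Real.log_pow]
  push_cast
  ring_nf

lemma F_nonneg {x s : ℝ} (hx : 0 < x) (hs : 0 < s) : 0 ≤ F x s := by
  rw [F_eq hx hs]
  have : (0:ℝ) ≤ s * (x - 1) ^ 2 / (x * (1 + s) ^ 2) := by positivity
  exact div_nonneg (Real.log_nonneg (by linarith)) hs.le

lemma F_le {x s : ℝ} (hx : 0 < x) (hs : 0 < s) :
    F x s ≤ (x - 1) ^ 2 / x * ((1 + s) ^ 2)⁻¹ := by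
  rw [F_eq hx hs]
  have h0 : (0:ℝ) ≤ s * (x - 1) ^ 2 / (x * (1 + s) ^ 2) := by positivity
  have hlog : Real.log (1 + s * (x - 1) ^ 2 / (x * (1 + s) ^ 2))
      ≤ s * (x - 1) ^ 2 / (x * (1 + s) ^ 2) := by
    have := Real.log_le_sub_one_of_pos (x := 1 + s * (x - 1) ^ 2 / (x * (1 + s) ^ 2))
      (by linarith)
    linarith
  calc Real.log (1 + s * (x - 1) ^ 2 / (x * (1 + s) ^ 2)) / s
      ≤ (s * (x - 1) ^ 2 / (x * (1 + s) ^ 2)) / s := by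
        gcongr
    _ = (x - 1) ^ 2 / x * ((1 + s) ^ 2)⁻¹ := by
        field_simp

/-- `(1+s)⁻²` is integrable on `(0,∞)`. -/
lemma integrable_inv_one_add_sq : IntegrableOn (fun s : ℝ => ((1 + s) ^ 2)⁻¹) (Ioi 0) := by
  have hderiv : ∀ s ∈ Ici (0:ℝ), HasDerivAt (fun t : ℝ => -(1 + t)⁻¹) (((1 + s) ^ 2)⁻¹) s := by
    intro s hs
    have h1 : (1:ℝ) + s ≠ 0 := by simp at hs; positivity
    have : HasDerivAt (fun t : ℝ => 1 + t) 1 s := (hasDerivAt_id s).const_add 1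
    have := (this.inv h1).neg
    refine this.congr_deriv ?_
    field_simp
  have htend : Tendsto (fun t : ℝ => -(1 + t)⁻¹) atTop (𝓝 0) := by
    have : Tendsto (fun t : ℝ => (1 + t)) atTop atTop :=
      tendsto_atTop_add_const_left _ 1 tendsto_id
    simpa using (this.inv_tendsto_atTop).neg
  exact integrableOn_Ioi_deriv_of_nonneg' hderiv (fun s hs => by positivity) htend

lemma contOn_F {x : ℝ} (hx : 0 < x) : ContinuousOn (F x) (Ioi 0) := by
  have c1 : ContinuousOn (fun s : ℝ => Real.log (1 + x * s)) (Ioi 0) :=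
    (continuous_const.add (continuous_const.mul continuous_id)).continuousOn.log
      (fun s hs => by have : (0:ℝ) < s := hs; show (1:ℝ) + x * s ≠ 0; positivity)
  have c2 : ContinuousOn (fun s : ℝ => Real.log (x + s)) (Ioi 0) :=
    (continuous_const.add continuous_id).continuousOn.log
      (fun s hs => by have : (0:ℝ) < s := hs; show x + s ≠ 0; positivity)
  have c3 : ContinuousOn (fun s : ℝ => Real.log (1 + s)) (Ioi 0) :=
    (continuous_const.add continuous_id).continuousOn.log
      (fun s hs => by have : (0:ℝ) < s := hs; show (1:ℝ) + s ≠ 0; positivity)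
  exact (((c1.add c2).sub continuousOn_const).sub (continuousOn_const.mul c3)).div
    continuousOn_id (fun s hs => ne_of_gt hs)

lemma F_integrableOn {x : ℝ} (hx : 0 < x) : IntegrableOn (F x) (Ioi 0) := by
  have hbound : IntegrableOn (fun s : ℝ => (x - 1) ^ 2 / x * ((1 + s) ^ 2)⁻¹) (Ioi 0) :=
    integrable_inv_one_add_sq.const_mul _
  refine Integrable.mono hbound ((contOn_F hx).aestronglyMeasurable measurableSet_Ioi) ?_
  filter_upwards [self_mem_ae_restrict measurableSet_Ioi] with s hs
  have hs : (0:ℝ) < s := hs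
  rw [Real.norm_eq_abs, abs_of_nonneg (F_nonneg hx hs), Real.norm_eq_abs]
  exact (F_le hx hs).trans (le_abs_self _)


lemma denom_lower {x s : ℝ} (hx : 0 < x) (hs : 0 ≤ s) :
    min x ((1 + x ^ 2) / 2) * (1 + s) ^ 2 ≤ (1 + x * s) * (x + s) := by
  have h1 : min x ((1 + x ^ 2) / 2) ≤ x := min_le_left _ _
  have h2 : min x ((1 + x ^ 2) / 2) ≤ (1 + x ^ 2) / 2 := min_le_right _ _
  nlinarith [sq_nonneg s, mul_nonneg hs hs, mul_nonneg (mul_nonneg hs hs) hs]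

lemma D_abs_le {x s : ℝ} (hx : 0 < x) (hs : 0 ≤ s) :
    |D x s| ≤ (x ^ 2 + 1) / (x * min x ((1 + x ^ 2) / 2)) * ((1 + s) ^ 2)⁻¹ := by
  have hm : 0 < min x ((1 + x ^ 2) / 2) := lt_min hx (by positivity)
  have hden : 0 < (1 + x * s) * (x + s) := by positivity
  have hlow := denom_lower hx hs
  rw [D, abs_div, abs_of_pos (by positivity : (0:ℝ) < x * (1 + x * s) * (x + s))]
  have hnum : |x ^ 2 - 1| ≤ x ^ 2 + 1 := by
    rw [abs_le]; constructor <;> nlinarith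
  calc |x ^ 2 - 1| / (x * (1 + x * s) * (x + s))
      ≤ (x ^ 2 + 1) / (x * (min x ((1 + x ^ 2) / 2) * (1 + s) ^ 2)) := by
        apply div_le_div₀ (by positivity) hnum (by positivity)
        have : min x ((1 + x ^ 2) / 2) * (1 + s) ^ 2 ≤ (1 + x * s) * (x + s) := hlow
        calc x * (min x ((1 + x ^ 2) / 2) * (1 + s) ^ 2)
            ≤ x * ((1 + x * s) * (x + s)) := by
              exact mul_le_mul_of_nonneg_left this hx.le
          _ = x * (1 + x * s) * (x + s) := by ring
    _ = (x ^ 2 + 1) / (x * min x ((1 + x ^ 2) / 2)) * ((1 + s) ^ 2)⁻¹ := by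
        rw [← mul_assoc, ← div_div, div_eq_mul_inv]

lemma contOn_D {x : ℝ} (hx : 0 < x) : ContinuousOn (D x) (Ioi 0) := by
  apply continuousOn_const.div
  · exact ((continuousOn_const.mul ((continuous_const.add
      (continuous_const.mul continuous_id)).continuousOn)).mul
      ((continuous_const.add continuous_id).continuousOn))
  · intro s hs
    have : (0:ℝ) < s := hs
    positivity

lemma D_integrableOn {x : ℝ} (hx : 0 < x) : IntegrableOn (D x) (Ioi 0) := by
  have hbound : IntegrableOn
      (fun s : ℝ => (x ^ 2 + 1) / (x * min x ((1 + x ^ 2) / 2)) * ((1 + s) ^ 2)⁻¹) (Ioi 0) :=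
    integrable_inv_one_add_sq.const_mul _
  refine Integrable.mono hbound ((contOn_D hx).aestronglyMeasurable measurableSet_Ioi) ?_
  filter_upwards [self_mem_ae_restrict measurableSet_Ioi] with s hs
  have hs : (0:ℝ) < s := hs
  rw [Real.norm_eq_abs, Real.norm_eq_abs]
  exact (D_abs_le hx hs.le).trans (le_abs_self _)

lemma integral_D {x : ℝ} (hx : 0 < x) :
    ∫ s in Ioi (0:ℝ), D x s = 2 * Real.log x / x := by
  set φ : ℝ → ℝ := fun s => (Real.log (1 + x * s) - Real.log (x + s)) / x with hφ
  have hderiv : ∀ s ∈ Ici (0:ℝ), HasDerivAt φ (D x s) s := by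
    intro s hs
    have hs : (0:ℝ) ≤ s := hs
    have h1 : (0:ℝ) < 1 + x * s := by positivity
    have h2 : (0:ℝ) < x + s := by positivity
    have d1 : HasDerivAt (fun s : ℝ => 1 + x * s) x s := by
      simpa using ((hasDerivAt_id s).const_mul x).const_add 1
    have d2 : HasDerivAt (fun s : ℝ => x + s) 1 s := by
      simpa using (hasDerivAt_id s).const_add x
    have := ((d1.log h1.ne').sub (d2.log h2.ne')).div_const x
    refine this.congr_deriv ?_
    rw [D]
    field_simp
    ring
  have htend : Tendsto φ atTop (𝓝 (Real.log x / x)) := by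
    have hnum : Tendsto (fun s : ℝ => s⁻¹ + x) atTop (𝓝 (0 + x)) :=
      tendsto_inv_atTop_zero.add_const x
    have hden : Tendsto (fun s : ℝ => x * s⁻¹ + 1) atTop (𝓝 (x * 0 + 1)) :=
      (tendsto_inv_atTop_zero.const_mul x).add_const 1
    have h1 : Tendsto (fun s : ℝ => (s⁻¹ + x) / (x * s⁻¹ + 1)) atTop (𝓝 x) := by
      have := hnum.div hden (by norm_num)
      simp only [zero_add, mul_zero, div_one] at this
      exact this
    have h1' : Tendsto (fun s : ℝ => (1 + x * s) / (x + s)) atTop (𝓝 x) := by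
      refine Tendsto.congr' ?_ h1
      filter_upwards [eventually_gt_atTop (0:ℝ)] with s hs
      rw [div_eq_div_iff (by positivity) (by positivity)]
      field_simp
    have h2 : Tendsto (fun s : ℝ => Real.log ((1 + x * s) / (x + s)) / x) atTop
        (𝓝 (Real.log x / x)) :=
      ((Real.continuousAt_log hx.ne').tendsto.comp h1').div_const x
    refine Tendsto.congr' ?_ h2
    filter_upwards [eventually_gt_atTop (0:ℝ)] with s hs
    have h3 : (0:ℝ) < 1 + x * s := by positivity
    have h4 : (0:ℝ) < x + s := by positivity
    rw [hφ, Real.log_div h3.ne' h4.ne']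
  have := integral_Ioi_of_hasDerivAt_of_tendsto' hderiv (D_integrableOn hx) htend
  rw [this, hφ]
  simp only [mul_zero, add_zero]
  rw [Real.log_one]
  ring


lemma hasDerivAt_F_x {s x : ℝ} (hs : 0 < s) (hx : 0 < x) :
    HasDerivAt (fun x => F x s) (D x s) x := by
  have h1 : (0:ℝ) < 1 + x * s := by positivity
  have h2 : (0:ℝ) < x + s := by positivity
  have d1 : HasDerivAt (fun x : ℝ => 1 + x * s) s x := by
    simpa using ((hasDerivAt_id x).mul_const s).const_add 1
  have d2 : HasDerivAt (fun x : ℝ => x + s) 1 x := by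
    simpa using (hasDerivAt_id x).add_const s
  have := (((d1.log h1.ne').add (d2.log h2.ne')).sub (Real.hasDerivAt_log hx.ne')).sub
    (hasDerivAt_const x (2 * Real.log (1 + s)))
  have := this.div_const s
  refine this.congr_deriv ?_
  rw [D]
  field_simp
  ring

lemma hasDerivAt_K {x₀ : ℝ} (hx₀ : 0 < x₀) :
    HasDerivAt (fun x => ∫ s in Ioi (0:ℝ), F x s) (2 * Real.log x₀ / x₀) x₀ := by
  have hε : 0 < x₀ / 2 := by positivity
  set C : ℝ := ((3 * x₀ / 2) ^ 2 + 1) / ((x₀ / 2) * min (x₀ / 2) (1 / 2)) with hC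
  have hball : ∀ x ∈ ball x₀ (x₀ / 2), x₀ / 2 < x ∧ x < 3 * x₀ / 2 := by
    intro x hx
    rw [mem_ball, Real.dist_eq, abs_sub_lt_iff] at hx
    constructor <;> linarith [hx.1, hx.2]
  have key := hasDerivAt_integral_of_dominated_loc_of_deriv_le (μ := volume.restrict (Ioi 0))
    (F := fun x s => F x s) (F' := fun x s => D x s) (x₀ := x₀)
    (bound := fun s => C * ((1 + s) ^ 2)⁻¹) (ball_mem_nhds x₀ hε) ?_ (F_integrableOn hx₀) ?_ ?_ ?_ ?_
  · rw [integral_D hx₀] at key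
    exact key.2
  · filter_upwards [eventually_gt_nhds hx₀] with x hx using
      (contOn_F hx).aestronglyMeasurable measurableSet_Ioi
  · exact (contOn_D hx₀).aestronglyMeasurable measurableSet_Ioi
  · filter_upwards [self_mem_ae_restrict measurableSet_Ioi] with s hs
    intro x hx
    obtain ⟨hx1, hx2⟩ := hball x hx
    have hxpos : 0 < x := lt_trans hε hx1
    have hs : (0:ℝ) < s := hs
    rw [Real.norm_eq_abs]
    refine (D_abs_le hxpos hs.le).trans ?_
    rw [hC]
    have hmin : min (x₀ / 2) (1 / 2) ≤ min x ((1 + x ^ 2) / 2) :=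
      min_le_min hx1.le (by nlinarith)
    have hminpos : (0:ℝ) < min (x₀ / 2) (1 / 2) := lt_min hε (by norm_num)
    have hA : (x ^ 2 + 1) / (x * min x ((1 + x ^ 2) / 2))
        ≤ ((3 * x₀ / 2) ^ 2 + 1) / ((x₀ / 2) * min (x₀ / 2) (1 / 2)) := by
      apply div_le_div₀ (by positivity) (by nlinarith) (by positivity)
      exact mul_le_mul hx1.le hmin hminpos.le (by positivity)
    exact mul_le_mul_of_nonneg_right hA (by positivity)
  · exact integrable_inv_one_add_sq.const_mul C
  · filter_upwards [self_mem_ae_restrict measurableSet_Ioi] with s hs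
    intro x hx
    have hs : (0:ℝ) < s := hs
    exact hasDerivAt_F_x hs (lt_trans hε (hball x hx).1)

lemma integral_F {x : ℝ} (hx : 0 < x) :
    ∫ s in Ioi (0:ℝ), F x s = (Real.log x) ^ 2 := by
  set G : ℝ → ℝ := fun x => (∫ s in Ioi (0:ℝ), F x s) - (Real.log x) ^ 2 with hGdef
  have hK1 : (∫ s in Ioi (0:ℝ), F 1 s) = 0 := by
    have : ∀ s : ℝ, F 1 s = 0 := by
      intro s
      rw [F, Real.log_one]
      ring_nf
    simp [this]
  have hG1 : G 1 = 0 := by simp [hGdef, hK1]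
  have hG : ∀ t : ℝ, 0 < t → HasDerivAt G 0 t := by
    intro t ht
    have h2 : HasDerivAt (fun x : ℝ => (Real.log x) ^ 2) (2 * Real.log t / t) t := by
      have := (Real.hasDerivAt_log ht.ne').pow 2
      refine this.congr_deriv ?_
      norm_num [div_eq_mul_inv]
    have h3 := (hasDerivAt_K ht).sub h2
    rw [sub_self] at h3
    exact h3
  have main : G x = 0 := by
    rcases le_total x 1 with hx1 | hx1
    · have hcont : ContinuousOn G (Icc x 1) := fun t ht =>
        (hG t (lt_of_lt_of_le hx ht.1)).continuousAt.continuousWithinAt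
      have := constant_of_has_deriv_right_zero hcont
        (fun t ht => (hG t (lt_of_lt_of_le hx ht.1)).hasDerivWithinAt)
        1 ⟨hx1, le_rfl⟩
      -- this : G 1 = G x
      rw [← this, hG1]
    · have hcont : ContinuousOn G (Icc 1 x) := fun t ht =>
        (hG t (lt_of_lt_of_le one_pos ht.1)).continuousAt.continuousWithinAt
      have := constant_of_has_deriv_right_zero hcont
        (fun t ht => (hG t (lt_of_lt_of_le one_pos ht.1)).hasDerivWithinAt)
        x ⟨hx1, le_rfl⟩
      rw [this, hG1]
  have : (∫ s in Ioi (0:ℝ), F x s) - (Real.log x) ^ 2 = 0 := main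
  linarith

end SSLI

theorem stmt_0 (y1 y2 y3 a1 a2 a3 : ℝ)
    (hy1 : 0 < y1) (hy2 : 0 < y2) (hy3 : 0 < y3)
    (ha1 : 0 < a1) (ha2 : 0 < a2) (ha3 : 0 < a3)
    (hprod : y1 * y2 * y3 = a1 * a2 * a3)
    (hsum : y1 + y2 + y3 ≥ a1 + a2 + a3)
    (hsum2 : y1 * y2 + y2 * y3 + y1 * y3 ≥ a1 * a2 + a2 * a3 + a1 * a3) :
    (Real.log y1)^2 + (Real.log y2)^2 + (Real.log y3)^2 ≥
    (Real.log a1)^2 + (Real.log a2)^2 + (Real.log a3)^2 := by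
  have hpt : ∀ s ∈ Ioi (0:ℝ),
      SSLI.F a1 s + SSLI.F a2 s + SSLI.F a3 s ≤ SSLI.F y1 s + SSLI.F y2 s + SSLI.F y3 s := by
    intro s hs
    have hs : (0:ℝ) < s := hs
    have e1 := sub_nonneg.2 hsum
    have e2 := sub_nonneg.2 hsum2
    have p1 : (1 + a1*s) * (1 + a2*s) * (1 + a3*s) ≤ (1 + y1*s) * (1 + y2*s) * (1 + y3*s) := by
      nlinarith [mul_nonneg hs.le e1, mul_nonneg (mul_nonneg hs.le hs.le) e2,
        mul_pos (mul_pos hs hs) hs]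
    have p2 : (a1 + s) * (a2 + s) * (a3 + s) ≤ (y1 + s) * (y2 + s) * (y3 + s) := by
      nlinarith [mul_nonneg hs.le e2, mul_nonneg (mul_nonneg hs.le hs.le) e1,
        mul_pos (mul_pos hs hs) hs]
    have l1 : Real.log (1 + a1*s) + Real.log (1 + a2*s) + Real.log (1 + a3*s)
        ≤ Real.log (1 + y1*s) + Real.log (1 + y2*s) + Real.log (1 + y3*s) := by
      have h := Real.log_le_log (by positivity) p1
      rwa [Real.log_mul (by positivity) (by positivity),
        Real.log_mul (by positivity) (by positivity),
        Real.log_mul (by positivity) (by positivity),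
        Real.log_mul (by positivity) (by positivity)] at h
    have l2 : Real.log (a1 + s) + Real.log (a2 + s) + Real.log (a3 + s)
        ≤ Real.log (y1 + s) + Real.log (y2 + s) + Real.log (y3 + s) := by
      have h := Real.log_le_log (by positivity) p2
      rwa [Real.log_mul (by positivity) (by positivity),
        Real.log_mul (by positivity) (by positivity),
        Real.log_mul (by positivity) (by positivity),
        Real.log_mul (by positivity) (by positivity)] at h
    have e5 : Real.log y1 + Real.log y2 + Real.log y3
        = Real.log a1 + Real.log a2 + Real.log a3 := by
      have := congrArg Real.log hprod
      rw [Real.log_mul (by positivity) hy3.ne', Real.log_mul hy1.ne' hy2.ne',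
        Real.log_mul (by positivity) ha3.ne', Real.log_mul ha1.ne' ha2.ne'] at this
      linarith
    have sumy : SSLI.F y1 s + SSLI.F y2 s + SSLI.F y3 s
        = ((Real.log (1 + y1*s) + Real.log (1 + y2*s) + Real.log (1 + y3*s))
          + (Real.log (y1 + s) + Real.log (y2 + s) + Real.log (y3 + s))
          - (Real.log y1 + Real.log y2 + Real.log y3) - 6 * Real.log (1 + s)) / s := by
      simp only [SSLI.F]
      ring
    have suma : SSLI.F a1 s + SSLI.F a2 s + SSLI.F a3 s
        = ((Real.log (1 + a1*s) + Real.log (1 + a2*s) + Real.log (1 + a3*s))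
          + (Real.log (a1 + s) + Real.log (a2 + s) + Real.log (a3 + s))
          - (Real.log a1 + Real.log a2 + Real.log a3) - 6 * Real.log (1 + s)) / s := by
      simp only [SSLI.F]
      ring
    rw [sumy, suma]
    exact div_le_div_of_nonneg_right (by linarith) hs.le
  have iy1 := SSLI.F_integrableOn hy1
  have iy2 := SSLI.F_integrableOn hy2
  have iy3 := SSLI.F_integrableOn hy3
  have ia1 := SSLI.F_integrableOn ha1
  have ia2 := SSLI.F_integrableOn ha2
  have ia3 := SSLI.F_integrableOn ha3
  have hmono : (∫ s in Ioi (0:ℝ), (SSLI.F a1 s + SSLI.F a2 s + SSLI.F a3 s))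
      ≤ ∫ s in Ioi (0:ℝ), (SSLI.F y1 s + SSLI.F y2 s + SSLI.F y3 s) :=
    setIntegral_mono_on ((ia1.add ia2).add ia3) ((iy1.add iy2).add iy3)
      measurableSet_Ioi hpt
  have i12y : Integrable (fun s => SSLI.F y1 s + SSLI.F y2 s) (volume.restrict (Ioi 0)) :=
    iy1.add iy2
  have i12a : Integrable (fun s => SSLI.F a1 s + SSLI.F a2 s) (volume.restrict (Ioi 0)) :=
    ia1.add ia2
  rw [MeasureTheory.integral_add i12y iy3,
    MeasureTheory.integral_add iy1 iy2,
    MeasureTheory.integral_add i12a ia3,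
    MeasureTheory.integral_add ia1 ia2,
    SSLI.integral_F hy1, SSLI.integral_F hy2, SSLI.integral_F hy3,
    SSLI.integral_F ha1, SSLI.integral_F ha2, SSLI.integral_F ha3] at hmono
  linarith
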